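/- If m×m matrix polynomials Â(λ), B̂(λ) of degree n admit a common right divisor C(λ) of degree d, i.e., Â = Ā·C and B̂ = B̄·C, then the extended Sylvester resultant factors as S_ℓ(Â, B̂) = S_ℓ(Ā, B̄)·τ(C), where τ(C) is the block-Toeplitz matrix of multiplication by C; consequently rank S_ℓ(Â, B̂) ≤ rank τ(C) ≤ 2m(ℓ−n) − md, so S_ℓ(Â, B̂) has a kernel of dimension at least md. -/

import Mathlib

open Matrix
open Matrix

lemma key (m n d ℓ : ℕ) (hd : d ≤ n) (hn : n ≤ ℓ)
    (A : Fin (n + 1) → Matrix (Fin m) (Fin m) ℝ)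
    (Abar : Fin (n - d + 1) → Matrix (Fin m) (Fin m) ℝ)
    (C : Fin (d + 1) → Matrix (Fin m) (Fin m) ℝ)
    (hA : ∀ k : Fin (n + 1), A k = ∑ j : Fin (d + 1),
      if h : (j : ℕ) ≤ (k : ℕ) ∧ (k : ℕ) - (j : ℕ) ≤ n - d then
        Abar ⟨(k : ℕ) - (j : ℕ), Nat.lt_succ_of_le h.2⟩ * C j else 0)
    (j : Fin (ℓ - n)) (i : Fin m) (c : Fin ℓ) (s : Fin m) :
    (if (j : ℕ) ≤ (c : ℕ) ∧ (c : ℕ) - (j : ℕ) ≤ n then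
        A ⟨n - ((c : ℕ) - (j : ℕ)), Nat.lt_succ_of_le (Nat.sub_le _ _)⟩ i s
      else 0) =
    ∑ p : Fin (ℓ - d), ∑ t : Fin m,
      (if (j : ℕ) ≤ (p : ℕ) ∧ (p : ℕ) - (j : ℕ) ≤ n - d then
          Abar ⟨n - d - ((p : ℕ) - (j : ℕ)), Nat.lt_succ_of_le (Nat.sub_le _ _)⟩ i t
        else 0) *
      (if (p : ℕ) ≤ (c : ℕ) ∧ (c : ℕ) - (p : ℕ) ≤ d then
          C ⟨d - ((c : ℕ) - (p : ℕ)), Nat.lt_succ_of_le (Nat.sub_le _ _)⟩ t s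
        else 0) := by
  have hj := j.2
  have hc := c.2
  -- collapse the inner sum into a matrix product entry
  have step : ∀ p : Fin (ℓ - d),
      (∑ t : Fin m,
        (if (j : ℕ) ≤ (p : ℕ) ∧ (p : ℕ) - (j : ℕ) ≤ n - d then
            Abar ⟨n - d - ((p : ℕ) - (j : ℕ)), Nat.lt_succ_of_le (Nat.sub_le _ _)⟩ i t
          else 0) *
        (if (p : ℕ) ≤ (c : ℕ) ∧ (c : ℕ) - (p : ℕ) ≤ d then
            C ⟨d - ((c : ℕ) - (p : ℕ)), Nat.lt_succ_of_le (Nat.sub_le _ _)⟩ t s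
          else 0)) =
      if ((j : ℕ) ≤ (p : ℕ) ∧ (p : ℕ) - (j : ℕ) ≤ n - d) ∧
          ((p : ℕ) ≤ (c : ℕ) ∧ (c : ℕ) - (p : ℕ) ≤ d) then
        (Abar ⟨n - d - ((p : ℕ) - (j : ℕ)), Nat.lt_succ_of_le (Nat.sub_le _ _)⟩ *
          C ⟨d - ((c : ℕ) - (p : ℕ)), Nat.lt_succ_of_le (Nat.sub_le _ _)⟩) i s
      else 0 := by
    intro p
    by_cases h1 : (j : ℕ) ≤ (p : ℕ) ∧ (p : ℕ) - (j : ℕ) ≤ n - d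
    · by_cases h2 : (p : ℕ) ≤ (c : ℕ) ∧ (c : ℕ) - (p : ℕ) ≤ d
      · simp only [if_pos h1, if_pos h2, if_pos (And.intro h1 h2), Matrix.mul_apply]
      · simp only [if_pos h1, if_neg h2, mul_zero, Finset.sum_const_zero]
        rw [if_neg (by tauto)]
    · simp only [if_neg h1, zero_mul, Finset.sum_const_zero]
      rw [if_neg (by tauto)]
  simp only [step]
  by_cases h : (j : ℕ) ≤ (c : ℕ) ∧ (c : ℕ) - (j : ℕ) ≤ n
  · simp only [h, and_self, if_true]
    set k : ℕ := n - ((c : ℕ) - (j : ℕ)) with hk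
    rw [hA]
    rw [Matrix.sum_apply]
    -- rewrite dite entries as total ite
    have lhs_eq : ∀ j' : Fin (d + 1),
        (if h' : (j' : ℕ) ≤ k ∧ k - (j' : ℕ) ≤ n - d then
            Abar ⟨k - (j' : ℕ), by omega⟩ * C j' else 0) i s =
        if (j' : ℕ) ≤ k ∧ k - (j' : ℕ) ≤ n - d then
          (Abar ⟨n - d - (n - d - (k - (j' : ℕ))), Nat.lt_succ_of_le (Nat.sub_le _ _)⟩ * C j') i s else 0 := by
      intro j'
      split_ifs with h'
      · have hidx : (⟨k - (j' : ℕ), by omega⟩ : Fin (n - d + 1)) =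
            ⟨n - d - (n - d - (k - (j' : ℕ))), Nat.lt_succ_of_le (Nat.sub_le _ _)⟩ :=
          Fin.ext (by first | omega | (simp; omega))
        rw [hidx]
      · simp
    simp only [← hk, lhs_eq]
    rw [← Finset.sum_filter, ← Finset.sum_filter]
    refine Finset.sum_bij' (fun j' hj' => (⟨(c : ℕ) - (d - (j' : ℕ)), ?_⟩ : Fin (ℓ - d)))
      (fun p hp => (⟨d - ((c : ℕ) - (p : ℕ)), ?_⟩ : Fin (d + 1))) ?_ ?_ ?_ ?_ ?_
    · simp only [Finset.mem_filter, Finset.mem_univ, true_and] at hj'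
      have := j'.2
      omega
    · simp only [Finset.mem_filter, Finset.mem_univ, true_and] at hp
      omega
    · intro j' hj'
      simp only [Finset.mem_filter, Finset.mem_univ, true_and] at hj' ⊢
      have := j'.2
      omega
    · intro p hp
      simp only [Finset.mem_filter, Finset.mem_univ, true_and] at hp ⊢
      have := p.2
      omega
    · intro j' hj'
      simp only [Finset.mem_filter, Finset.mem_univ, true_and] at hj'
      have := j'.2
      exact Fin.ext (by first | omega | (simp; omega))
    · intro p hp
      simp only [Finset.mem_filter, Finset.mem_univ, true_and] at hp
      have := p.2
      exact Fin.ext (by first | omega | (simp; omega))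
    · intro j' hj'
      simp only [Finset.mem_filter, Finset.mem_univ, true_and] at hj'
      have h2 := j'.2
      beta_reduce
      apply congrFun
      apply congrFun
      congr 1
      · exact congrArg Abar (Fin.ext (by simp; omega))
      · exact congrArg C (Fin.ext (by simp; omega))
  · rw [if_neg h]
    symm
    apply Finset.sum_eq_zero
    intro p _
    rw [if_neg]
    rintro ⟨⟨h1, h2⟩, h3, h4⟩
    exact h ⟨by omega, by omega⟩


/-- The generalized Sylvester matrix (blocks of size `m × m`, `r` block rows for
each of the two coefficient families, `ℓ` block columns, descending order). -/
def Syl (m n r ℓ : ℕ) (A B : Fin (n + 1) → Matrix (Fin m) (Fin m) ℝ) :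
    Matrix ((Fin r ⊕ Fin r) × Fin m) (Fin ℓ × Fin m) ℝ :=
  fun p q =>
    match p, q with
    | (Sum.inl j, i), (c, s) =>
        if (j : ℕ) ≤ (c : ℕ) ∧ (c : ℕ) - (j : ℕ) ≤ n then
          A ⟨n - ((c : ℕ) - (j : ℕ)), Nat.lt_succ_of_le (Nat.sub_le _ _)⟩ i s
        else 0
    | (Sum.inr j, i), (c, s) =>
        if (j : ℕ) ≤ (c : ℕ) ∧ (c : ℕ) - (j : ℕ) ≤ n then
          B ⟨n - ((c : ℕ) - (j : ℕ)), Nat.lt_succ_of_le (Nat.sub_le _ _)⟩ i s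
        else 0

/-- The block-Toeplitz matrix `τ(C)` of right multiplication by the degree-`d`
matrix polynomial `C`, acting on (descending) coefficient block rows. -/
def Toep (m d ℓ : ℕ) (C : Fin (d + 1) → Matrix (Fin m) (Fin m) ℝ) :
    Matrix (Fin (ℓ - d) × Fin m) (Fin ℓ × Fin m) ℝ :=
  fun p q =>
    if (p.1 : ℕ) ≤ (q.1 : ℕ) ∧ (q.1 : ℕ) - (p.1 : ℕ) ≤ d then
      C ⟨d - ((q.1 : ℕ) - (p.1 : ℕ)), Nat.lt_succ_of_le (Nat.sub_le _ _)⟩ p.2 q.2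
    else 0

/-- If `Â = Ā·C` and `B̂ = B̄·C` with `C` monic of degree `d`, then the extended
Sylvester resultant factors as `S_ℓ(Â,B̂) = S_ℓ(Ā,B̄)·τ(C)`; consequently
`rank S_ℓ(Â,B̂) ≤ rank τ(C) ≤ mℓ − md` and the kernel of `S_ℓ(Â,B̂)` has
dimension at least `md`. -/
theorem sylvester_factorization_common_divisor (m n d ℓ : ℕ)
    (hd : d ≤ n) (hn : n ≤ ℓ)
    (A B : Fin (n + 1) → Matrix (Fin m) (Fin m) ℝ)
    (Abar Bbar : Fin (n - d + 1) → Matrix (Fin m) (Fin m) ℝ)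
    (C : Fin (d + 1) → Matrix (Fin m) (Fin m) ℝ)
    (hC : C ⟨d, Nat.lt_succ_self d⟩ = 1)
    (hA : ∀ k : Fin (n + 1), A k = ∑ j : Fin (d + 1),
      if h : (j : ℕ) ≤ (k : ℕ) ∧ (k : ℕ) - (j : ℕ) ≤ n - d then
        Abar ⟨(k : ℕ) - (j : ℕ), by omega⟩ * C j else 0)
    (hB : ∀ k : Fin (n + 1), B k = ∑ j : Fin (d + 1),
      if h : (j : ℕ) ≤ (k : ℕ) ∧ (k : ℕ) - (j : ℕ) ≤ n - d then
        Bbar ⟨(k : ℕ) - (j : ℕ), by omega⟩ * C j else 0) :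
    Syl m n (ℓ - n) ℓ A B =
        Syl m (n - d) (ℓ - n) (ℓ - d) Abar Bbar * Toep m d ℓ C ∧
      (Syl m n (ℓ - n) ℓ A B).rank ≤ (Toep m d ℓ C).rank ∧
      (Toep m d ℓ C).rank ≤ m * ℓ - m * d ∧
      m * d ≤ Module.finrank ℝ
        (LinearMap.ker (Matrix.mulVecLin (Syl m n (ℓ - n) ℓ A B))) := by
  have hfact : Syl m n (ℓ - n) ℓ A B =
      Syl m (n - d) (ℓ - n) (ℓ - d) Abar Bbar * Toep m d ℓ C := by
    ext p q
    obtain ⟨pj, i⟩ := p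
    obtain ⟨c, s⟩ := q
    rw [Matrix.mul_apply, Fintype.sum_prod_type]
    cases pj with
    | inl j =>
      simpa [Syl, Toep] using key m n d ℓ hd hn A Abar C hA j i c s
    | inr j =>
      simpa [Syl, Toep] using key m n d ℓ hd hn B Bbar C hB j i c s
  have hrank2 : (Toep m d ℓ C).rank ≤ m * ℓ - m * d := by
    calc (Toep m d ℓ C).rank ≤ Fintype.card (Fin (ℓ - d) × Fin m) :=
          Matrix.rank_le_card_height _
      _ = (ℓ - d) * m := by simp
      _ = m * ℓ - m * d := by rw [Nat.mul_comm, Nat.mul_sub]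
  have hrank1 : (Syl m n (ℓ - n) ℓ A B).rank ≤ (Toep m d ℓ C).rank := by
    rw [hfact]; exact Matrix.rank_mul_le_right _ _
  refine ⟨hfact, hrank1, hrank2, ?_⟩
  have h1 : (Syl m n (ℓ - n) ℓ A B).rank + Module.finrank ℝ
      (LinearMap.ker (Matrix.mulVecLin (Syl m n (ℓ - n) ℓ A B))) =
      Module.finrank ℝ ((Fin ℓ × Fin m) → ℝ) :=
    LinearMap.finrank_range_add_finrank_ker _
  rw [Module.finrank_fintype_fun_eq_card] at h1
  have hcard : Fintype.card (Fin ℓ × Fin m) = ℓ * m := by simp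
  have h3 : m * d ≤ m * ℓ := Nat.mul_le_mul_left m (hd.trans hn)
  have hcomm : m * ℓ = ℓ * m := Nat.mul_comm m ℓ
  omega
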